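/- Any n-step staircase C equals B_X ∨ B_Y ∨ B_Z, the join of three maximal chains from (0,0,0) to the maximum point, obtained by the boundary tracing algorithms with search orders (x,y,z), (y,z,x), and (z,x,y) respectively. Consequently an n-step staircase has convex dimension at most 3. -/
import Mathlib


/-- Accessibility (A1) for a set of points in `ℕ³`: every nonzero point of `C`
has a point of `C` obtained by decrementing one coordinate. -/
def Accessible3 (C : Set (ℕ × ℕ × ℕ)) : Prop :=
  ∀ p ∈ C, p ≠ (0, 0, 0) →
    (1 ≤ p.1 ∧ (p.1 - 1, p.2.1, p.2.2) ∈ C) ∨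
    (1 ≤ p.2.1 ∧ (p.1, p.2.1 - 1, p.2.2) ∈ C) ∨
    (1 ≤ p.2.2 ∧ (p.1, p.2.1, p.2.2 - 1) ∈ C)

/-- Componentwise maximum (multiset union) of two points of `ℕ³`. -/
def sup3 (a b : ℕ × ℕ × ℕ) : ℕ × ℕ × ℕ :=
  (max a.1 b.1, max a.2.1 b.2.1, max a.2.2 b.2.2)

/-- Componentwise minimum (multiset intersection) of two points of `ℕ³`. -/
def inf3 (a b : ℕ × ℕ × ℕ) : ℕ × ℕ × ℕ :=
  (min a.1 b.1, min a.2.1 b.2.1, min a.2.2 b.2.2)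

/-- Componentwise order on points of `ℕ³`. -/
def le3 (a b : ℕ × ℕ × ℕ) : Prop :=
  a.1 ≤ b.1 ∧ a.2.1 ≤ b.2.1 ∧ a.2.2 ≤ b.2.2

/-- The digital cuboid with minimum corner `a` and maximum corner `b`. -/
def Cuboid (a b : ℕ × ℕ × ℕ) : Set (ℕ × ℕ × ℕ) :=
  {p | a.1 ≤ p.1 ∧ p.1 ≤ b.1 ∧ a.2.1 ≤ p.2.1 ∧ p.2.1 ≤ b.2.1 ∧
       a.2.2 ≤ p.2.2 ∧ p.2.2 ≤ b.2.2}

/-- `lo 0, hi 0`, ..., `lo (n-1), hi (n-1)` are the corners of a regular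
sequence of `n` digital cuboids. -/
def RegularSeq (n : ℕ) (lo hi : ℕ → ℕ × ℕ × ℕ) : Prop :=
  1 ≤ n ∧ lo 0 = (0, 0, 0) ∧
  (∀ i < n, le3 (lo i) (hi i) ∧ lo i ≠ hi i) ∧
  (∀ i, i + 1 < n →
    (le3 (lo i) (lo (i + 1)) ∧ lo i ≠ lo (i + 1)) ∧
    le3 (lo (i + 1)) (hi i) ∧
    (le3 (hi i) (hi (i + 1)) ∧ hi i ≠ hi (i + 1)))

/-- The `n`-step staircase determined by a (regular) sequence of cuboids. -/
def Staircase (n : ℕ) (lo hi : ℕ → ℕ × ℕ × ℕ) : Set (ℕ × ℕ × ℕ) :=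
  {p | ∃ i < n, p ∈ Cuboid (lo i) (hi i)}

open scoped Classical in
/-- One step of the boundary tracing algorithm with search order `(x,y,z)`:
decrement `x` if the result lies in `C`, else decrement `y` if the result lies
in `C`, else decrement `z`. -/
noncomputable def stepXYZ (C : Set (ℕ × ℕ × ℕ)) (p : ℕ × ℕ × ℕ) : ℕ × ℕ × ℕ :=
  if 1 ≤ p.1 ∧ (p.1 - 1, p.2.1, p.2.2) ∈ C then (p.1 - 1, p.2.1, p.2.2)
  else if 1 ≤ p.2.1 ∧ (p.1, p.2.1 - 1, p.2.2) ∈ C then (p.1, p.2.1 - 1, p.2.2)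
  else (p.1, p.2.1, p.2.2 - 1)

open scoped Classical in
/-- One step of the boundary tracing algorithm with search order `(y,z,x)`. -/
noncomputable def stepYZX (C : Set (ℕ × ℕ × ℕ)) (p : ℕ × ℕ × ℕ) : ℕ × ℕ × ℕ :=
  if 1 ≤ p.2.1 ∧ (p.1, p.2.1 - 1, p.2.2) ∈ C then (p.1, p.2.1 - 1, p.2.2)
  else if 1 ≤ p.2.2 ∧ (p.1, p.2.1, p.2.2 - 1) ∈ C then (p.1, p.2.1, p.2.2 - 1)
  else (p.1 - 1, p.2.1, p.2.2)

open scoped Classical in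
/-- One step of the boundary tracing algorithm with search order `(z,x,y)`. -/
noncomputable def stepZXY (C : Set (ℕ × ℕ × ℕ)) (p : ℕ × ℕ × ℕ) : ℕ × ℕ × ℕ :=
  if 1 ≤ p.2.2 ∧ (p.1, p.2.1, p.2.2 - 1) ∈ C then (p.1, p.2.1, p.2.2 - 1)
  else if 1 ≤ p.1 ∧ (p.1 - 1, p.2.1, p.2.2) ∈ C then (p.1 - 1, p.2.1, p.2.2)
  else (p.1, p.2.1 - 1, p.2.2)

/-- The chain produced by iterating a tracing step from the maximum point. -/
def traceChain (step : (ℕ × ℕ × ℕ) → ℕ × ℕ × ℕ) (top : ℕ × ℕ × ℕ) :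
    Set (ℕ × ℕ × ℕ) :=
  {q | ∃ i : ℕ, step^[i] top = q}


lemma le3_iff {a b : ℕ × ℕ × ℕ} :
    le3 a b ↔ a.1 ≤ b.1 ∧ a.2.1 ≤ b.2.1 ∧ a.2.2 ≤ b.2.2 := Iff.rfl
lemma mem_cuboid' {a b p : ℕ × ℕ × ℕ} :
    p ∈ Cuboid a b ↔ a.1 ≤ p.1 ∧ p.1 ≤ b.1 ∧ a.2.1 ≤ p.2.1 ∧ p.2.1 ≤ b.2.1 ∧
      a.2.2 ≤ p.2.2 ∧ p.2.2 ≤ b.2.2 := Iff.rfl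
lemma mem_cuboid_mk {a b : ℕ × ℕ × ℕ} {x y z : ℕ} :
    (x, y, z) ∈ Cuboid a b ↔ a.1 ≤ x ∧ x ≤ b.1 ∧ a.2.1 ≤ y ∧ y ≤ b.2.1 ∧
      a.2.2 ≤ z ∧ z ≤ b.2.2 := Iff.rfl
lemma ne_zero_iff3 {p : ℕ × ℕ × ℕ} :
    p ≠ (0, 0, 0) ↔ ¬(p.1 = 0 ∧ p.2.1 = 0 ∧ p.2.2 = 0) := by
  simp [Prod.ext_iff]
variable {n : ℕ} {lo hi : ℕ → ℕ × ℕ × ℕ}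
lemma le3_refl (a : ℕ × ℕ × ℕ) : le3 a a := ⟨le_rfl, le_rfl, le_rfl⟩
lemma le3_trans {a b c : ℕ × ℕ × ℕ} (h1 : le3 a b) (h2 : le3 b c) : le3 a c :=
  ⟨h1.1.trans h2.1, h1.2.1.trans h2.2.1, h1.2.2.trans h2.2.2⟩
lemma lo_mono (hreg : RegularSeq n lo hi) :
    ∀ j, j < n → ∀ i, i ≤ j → le3 (lo i) (lo j) := by
  intro j
  induction j with
  | zero => intro _ i hij; obtain rfl := Nat.le_zero.mp hij; exact le3_refl _
  | succ j ih =>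
    intro hj i hij
    rcases Nat.eq_or_lt_of_le hij with rfl | h
    · exact le3_refl _
    · exact le3_trans (ih (by omega) i (by omega)) (hreg.2.2.2 j (by omega)).1.1
lemma hi_mono (hreg : RegularSeq n lo hi) :
    ∀ j, j < n → ∀ i, i ≤ j → le3 (hi i) (hi j) := by
  intro j
  induction j with
  | zero => intro _ i hij; obtain rfl := Nat.le_zero.mp hij; exact le3_refl _
  | succ j ih =>
    intro hj i hij
    rcases Nat.eq_or_lt_of_le hij with rfl | h
    · exact le3_refl _
    · exact le3_trans (ih (by omega) i (by omega)) (hreg.2.2.2 j (by omega)).2.2.1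

lemma stuck_xyz (hreg : RegularSeq n lo hi) :
    ∀ m, m < n → ∀ p : ℕ × ℕ × ℕ, p ∈ Cuboid (lo m) (hi m) →
    ¬(1 ≤ p.1 ∧ (p.1 - 1, p.2.1, p.2.2) ∈ Staircase n lo hi) →
    ¬(1 ≤ p.2.1 ∧ (p.1, p.2.1 - 1, p.2.2) ∈ Staircase n lo hi) →
    ((p ≠ (0, 0, 0) → 1 ≤ p.2.2 ∧ (p.1, p.2.1, p.2.2 - 1) ∈ Staircase n lo hi) ∧
     (∀ q ∈ Staircase n lo hi, p.2.2 ≤ q.2.2 → p.1 ≤ q.1 ∧ p.2.1 ≤ q.2.1)) := by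
  intro m
  induction m using Nat.strong_induction_on with
  | _ m ih =>
    intro hm p hp hfx hfy
    rw [mem_cuboid'] at hp
    have hx : p.1 = (lo m).1 := by
      by_contra hne
      exact hfx ⟨by omega, m, hm, mem_cuboid_mk.mpr (by omega)⟩
    have hy : p.2.1 = (lo m).2.1 := by
      by_contra hne
      exact hfy ⟨by omega, m, hm, mem_cuboid_mk.mpr (by omega)⟩
    have hstep : 1 ≤ m → le3 (lo (m - 1)) (lo m) ∧ le3 (lo m) (hi (m - 1)) := by
      intro hm0
      have hmm : m - 1 + 1 = m := by omega
      have h := hreg.2.2.2 (m - 1) (by omega)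
      rw [hmm] at h
      exact ⟨h.1.1, h.2.1⟩
    have hdesc : 1 ≤ m → p.2.2 ≤ (hi (m - 1)).2.2 →
        p ∈ Cuboid (lo (m - 1)) (hi (m - 1)) := by
      intro hm0 hz
      obtain ⟨h1, h2⟩ := hstep hm0
      rw [le3_iff] at h1 h2
      rw [mem_cuboid']
      omega
    constructor
    · intro hne
      rw [ne_zero_iff3] at hne
      by_cases hz : (lo m).2.2 < p.2.2
      · exact ⟨by omega, m, hm, mem_cuboid_mk.mpr (by omega)⟩
      · rcases Nat.eq_zero_or_pos m with rfl | hmpos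
        · exfalso
          have h0 := hreg.2.1
          have e1 : (lo 0).1 = 0 := by rw [h0]
          have e2 : (lo 0).2.1 = 0 := by rw [h0]
          have e3 : (lo 0).2.2 = 0 := by rw [h0]
          omega
        · have h2 := (hstep hmpos).2
          rw [le3_iff] at h2
          have hp' := hdesc hmpos (by omega)
          exact (ih (m - 1) (by omega) (by omega) p hp' hfx hfy).1 (by rw [ne_zero_iff3]; omega)
    · intro q hq hzq
      obtain ⟨j, hj, hqj⟩ := hq
      rw [mem_cuboid'] at hqj
      rcases le_or_gt m j with hmj | hjm
      · have hlo := lo_mono hreg j hj m hmj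
        rw [le3_iff] at hlo
        omega
      · have hmpos : 1 ≤ m := by omega
        have hhij : le3 (hi j) (hi (m - 1)) := hi_mono hreg (m - 1) (by omega) j (by omega)
        rw [le3_iff] at hhij
        have hp' := hdesc hmpos (by omega)
        exact (ih (m - 1) (by omega) (by omega) p hp' hfx hfy).2 q ⟨j, hj, by rw [mem_cuboid']; omega⟩ hzq


lemma stuck_yzx (hreg : RegularSeq n lo hi) :
    ∀ m, m < n → ∀ p : ℕ × ℕ × ℕ, p ∈ Cuboid (lo m) (hi m) →
    ¬(1 ≤ p.2.1 ∧ (p.1, p.2.1 - 1, p.2.2) ∈ Staircase n lo hi) →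
    ¬(1 ≤ p.2.2 ∧ (p.1, p.2.1, p.2.2 - 1) ∈ Staircase n lo hi) →
    ((p ≠ (0, 0, 0) → 1 ≤ p.1 ∧ (p.1 - 1, p.2.1, p.2.2) ∈ Staircase n lo hi) ∧
     (∀ q ∈ Staircase n lo hi, p.1 ≤ q.1 → p.2.1 ≤ q.2.1 ∧ p.2.2 ≤ q.2.2)) := by
  intro m
  induction m using Nat.strong_induction_on with
  | _ m ih =>
    intro hm p hp hfy hfz
    rw [mem_cuboid'] at hp
    have hy : p.2.1 = (lo m).2.1 := by
      by_contra hne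
      exact hfy ⟨by omega, m, hm, mem_cuboid_mk.mpr (by omega)⟩
    have hz : p.2.2 = (lo m).2.2 := by
      by_contra hne
      exact hfz ⟨by omega, m, hm, mem_cuboid_mk.mpr (by omega)⟩
    have hstep : 1 ≤ m → le3 (lo (m - 1)) (lo m) ∧ le3 (lo m) (hi (m - 1)) := by
      intro hm0
      have hmm : m - 1 + 1 = m := by omega
      have h := hreg.2.2.2 (m - 1) (by omega)
      rw [hmm] at h
      exact ⟨h.1.1, h.2.1⟩
    have hdesc : 1 ≤ m → p.1 ≤ (hi (m - 1)).1 →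
        p ∈ Cuboid (lo (m - 1)) (hi (m - 1)) := by
      intro hm0 hxle
      obtain ⟨h1, h2⟩ := hstep hm0
      rw [le3_iff] at h1 h2
      rw [mem_cuboid']
      omega
    constructor
    · intro hne
      rw [ne_zero_iff3] at hne
      by_cases hxs : (lo m).1 < p.1
      · exact ⟨by omega, m, hm, mem_cuboid_mk.mpr (by omega)⟩
      · rcases Nat.eq_zero_or_pos m with rfl | hmpos
        · exfalso
          have h0 := hreg.2.1
          have e1 : (lo 0).1 = 0 := by rw [h0]
          have e2 : (lo 0).2.1 = 0 := by rw [h0]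
          have e3 : (lo 0).2.2 = 0 := by rw [h0]
          omega
        · have h2 := (hstep hmpos).2
          rw [le3_iff] at h2
          have hp' := hdesc hmpos (by omega)
          exact (ih (m - 1) (by omega) (by omega) p hp' hfy hfz).1 (by rw [ne_zero_iff3]; omega)
    · intro q hq hxq
      obtain ⟨j, hj, hqj⟩ := hq
      rw [mem_cuboid'] at hqj
      rcases le_or_gt m j with hmj | hjm
      · have hlo := lo_mono hreg j hj m hmj
        rw [le3_iff] at hlo
        omega
      · have hmpos : 1 ≤ m := by omega
        have hhij : le3 (hi j) (hi (m - 1)) := hi_mono hreg (m - 1) (by omega) j (by omega)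
        rw [le3_iff] at hhij
        have hp' := hdesc hmpos (by omega)
        exact (ih (m - 1) (by omega) (by omega) p hp' hfy hfz).2 q ⟨j, hj, by rw [mem_cuboid']; omega⟩ hxq

lemma stuck_zxy (hreg : RegularSeq n lo hi) :
    ∀ m, m < n → ∀ p : ℕ × ℕ × ℕ, p ∈ Cuboid (lo m) (hi m) →
    ¬(1 ≤ p.2.2 ∧ (p.1, p.2.1, p.2.2 - 1) ∈ Staircase n lo hi) →
    ¬(1 ≤ p.1 ∧ (p.1 - 1, p.2.1, p.2.2) ∈ Staircase n lo hi) →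
    ((p ≠ (0, 0, 0) → 1 ≤ p.2.1 ∧ (p.1, p.2.1 - 1, p.2.2) ∈ Staircase n lo hi) ∧
     (∀ q ∈ Staircase n lo hi, p.2.1 ≤ q.2.1 → p.2.2 ≤ q.2.2 ∧ p.1 ≤ q.1)) := by
  intro m
  induction m using Nat.strong_induction_on with
  | _ m ih =>
    intro hm p hp hfz hfx
    rw [mem_cuboid'] at hp
    have hz : p.2.2 = (lo m).2.2 := by
      by_contra hne
      exact hfz ⟨by omega, m, hm, mem_cuboid_mk.mpr (by omega)⟩
    have hx : p.1 = (lo m).1 := by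
      by_contra hne
      exact hfx ⟨by omega, m, hm, mem_cuboid_mk.mpr (by omega)⟩
    have hstep : 1 ≤ m → le3 (lo (m - 1)) (lo m) ∧ le3 (lo m) (hi (m - 1)) := by
      intro hm0
      have hmm : m - 1 + 1 = m := by omega
      have h := hreg.2.2.2 (m - 1) (by omega)
      rw [hmm] at h
      exact ⟨h.1.1, h.2.1⟩
    have hdesc : 1 ≤ m → p.2.1 ≤ (hi (m - 1)).2.1 →
        p ∈ Cuboid (lo (m - 1)) (hi (m - 1)) := by
      intro hm0 hyle
      obtain ⟨h1, h2⟩ := hstep hm0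
      rw [le3_iff] at h1 h2
      rw [mem_cuboid']
      omega
    constructor
    · intro hne
      rw [ne_zero_iff3] at hne
      by_cases hys : (lo m).2.1 < p.2.1
      · exact ⟨by omega, m, hm, mem_cuboid_mk.mpr (by omega)⟩
      · rcases Nat.eq_zero_or_pos m with rfl | hmpos
        · exfalso
          have h0 := hreg.2.1
          have e1 : (lo 0).1 = 0 := by rw [h0]
          have e2 : (lo 0).2.1 = 0 := by rw [h0]
          have e3 : (lo 0).2.2 = 0 := by rw [h0]
          omega
        · have h2 := (hstep hmpos).2
          rw [le3_iff] at h2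
          have hp' := hdesc hmpos (by omega)
          exact (ih (m - 1) (by omega) (by omega) p hp' hfz hfx).1 (by rw [ne_zero_iff3]; omega)
    · intro q hq hyq
      obtain ⟨j, hj, hqj⟩ := hq
      rw [mem_cuboid'] at hqj
      rcases le_or_gt m j with hmj | hjm
      · have hlo := lo_mono hreg j hj m hmj
        rw [le3_iff] at hlo
        omega
      · have hmpos : 1 ≤ m := by omega
        have hhij : le3 (hi j) (hi (m - 1)) := hi_mono hreg (m - 1) (by omega) j (by omega)
        rw [le3_iff] at hhij
        have hp' := hdesc hmpos (by omega)
        exact (ih (m - 1) (by omega) (by omega) p hp' hfz hfx).2 q ⟨j, hj, by rw [mem_cuboid']; omega⟩ hyq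


section ChainLemmas

variable {n : ℕ} {lo hi : ℕ → ℕ × ℕ × ℕ}

lemma top_mem (hreg : RegularSeq n lo hi) : hi (n - 1) ∈ Staircase n lo hi := by
  refine ⟨n - 1, by have := hreg.1; omega, ?_⟩
  have h := (hreg.2.2.1 (n - 1) (by have := hreg.1; omega)).1
  rw [le3_iff] at h
  rw [mem_cuboid']
  omega

lemma x_le_top (hreg : RegularSeq n lo hi) {p : ℕ × ℕ × ℕ} (hp : p ∈ Staircase n lo hi) :
    p.1 ≤ (hi (n - 1)).1 ∧ p.2.1 ≤ (hi (n - 1)).2.1 ∧ p.2.2 ≤ (hi (n - 1)).2.2 := by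
  obtain ⟨j, hj, hpj⟩ := hp
  have h := hi_mono hreg (n - 1) (by have := hreg.1; omega) j (by omega)
  rw [le3_iff] at h
  rw [mem_cuboid'] at hpj
  omega

/-! ### Chain lemmas for the `(x,y,z)` order -/

lemma stepXYZ_mem (hreg : RegularSeq n lo hi) {p : ℕ × ℕ × ℕ}
    (hp : p ∈ Staircase n lo hi) : stepXYZ (Staircase n lo hi) p ∈ Staircase n lo hi := by
  unfold stepXYZ
  split_ifs with h1 h2
  · exact h1.2
  · exact h2.2
  · by_cases h0 : p = (0, 0, 0)
    · subst h0; simpa using hp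
    · obtain ⟨m, hm, hpm⟩ := hp
      exact ((stuck_xyz hreg m hm p hpm h1 h2).1 h0).2

lemma chainXYZ_mem (hreg : RegularSeq n lo hi) (i : ℕ) :
    (stepXYZ (Staircase n lo hi))^[i] (hi (n - 1)) ∈ Staircase n lo hi := by
  induction i with
  | zero => simpa using top_mem hreg
  | succ i ih => rw [Function.iterate_succ_apply']; exact stepXYZ_mem hreg ih

lemma stepXYZ_zero (C : Set (ℕ × ℕ × ℕ)) : stepXYZ C (0, 0, 0) = (0, 0, 0) := by
  unfold stepXYZ
  simp

lemma stepXYZ_sum (hreg : RegularSeq n lo hi) {p : ℕ × ℕ × ℕ}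
    (hp : p ∈ Staircase n lo hi) (h0 : p ≠ (0, 0, 0)) :
    (stepXYZ (Staircase n lo hi) p).1 + (stepXYZ (Staircase n lo hi) p).2.1 +
      (stepXYZ (Staircase n lo hi) p).2.2 < p.1 + p.2.1 + p.2.2 := by
  unfold stepXYZ
  split_ifs with h1 h2
  · have := h1.1
    show p.1 - 1 + p.2.1 + p.2.2 < p.1 + p.2.1 + p.2.2
    omega
  · have := h2.1
    show p.1 + (p.2.1 - 1) + p.2.2 < p.1 + p.2.1 + p.2.2
    omega
  · obtain ⟨m, hm, hpm⟩ := hp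
    have := ((stuck_xyz hreg m hm p hpm h1 h2).1 h0).1
    show p.1 + p.2.1 + (p.2.2 - 1) < p.1 + p.2.1 + p.2.2
    omega

lemma chainXYZ_zero (hreg : RegularSeq n lo hi) :
    ∃ N, (stepXYZ (Staircase n lo hi))^[N] (hi (n - 1)) = (0, 0, 0) := by
  suffices h : ∀ k (p : ℕ × ℕ × ℕ), p ∈ Staircase n lo hi → p.1 + p.2.1 + p.2.2 ≤ k →
      (stepXYZ (Staircase n lo hi))^[k] p = (0, 0, 0) by
    exact ⟨_, h _ _ (top_mem hreg) le_rfl⟩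
  intro k
  induction k with
  | zero =>
    intro p hp hle
    obtain ⟨x, y, z⟩ := p
    simp only [Function.iterate_zero, id_eq]
    simp only [Prod.mk.injEq]
    simp at hle
    omega
  | succ k ih =>
    intro p hp hle
    by_cases h0 : p = (0, 0, 0)
    · subst h0
      rw [Function.iterate_succ_apply, stepXYZ_zero]
      exact ih _ hp (by simp)
    · rw [Function.iterate_succ_apply]
      exact ih _ (stepXYZ_mem hreg hp)
        (by have := stepXYZ_sum hreg hp h0; omega)

lemma stepXYZ_z (C : Set (ℕ × ℕ × ℕ)) (p : ℕ × ℕ × ℕ) :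
    (stepXYZ C p).2.2 ≤ p.2.2 ∧ p.2.2 ≤ (stepXYZ C p).2.2 + 1 := by
  unfold stepXYZ
  split_ifs with h1 h2
  · exact ⟨le_rfl, Nat.le_succ _⟩
  · exact ⟨le_rfl, Nat.le_succ _⟩
  · exact ⟨Nat.sub_le _ _, by show p.2.2 ≤ p.2.2 - 1 + 1; omega⟩

lemma stepXYZ_drop {C : Set (ℕ × ℕ × ℕ)} {p : ℕ × ℕ × ℕ}
    (h : (stepXYZ C p).2.2 ≠ p.2.2) :
    ¬(1 ≤ p.1 ∧ (p.1 - 1, p.2.1, p.2.2) ∈ C) ∧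
    ¬(1 ≤ p.2.1 ∧ (p.1, p.2.1 - 1, p.2.2) ∈ C) := by
  unfold stepXYZ at h
  split_ifs at h with h1 h2
  · simp at h
  · simp at h
  · exact ⟨h1, h2⟩

lemma chainXYZ_reach (hreg : RegularSeq n lo hi) {p : ℕ × ℕ × ℕ}
    (hp : p ∈ Staircase n lo hi) :
    ∃ a ∈ traceChain (stepXYZ (Staircase n lo hi)) (hi (n - 1)),
      a.2.2 = p.2.2 ∧ a.1 ≤ p.1 ∧ a.2.1 ≤ p.2.1 := by
  classical
  obtain ⟨N, hN⟩ := chainXYZ_zero hreg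
  rcases Nat.eq_zero_or_pos p.2.2 with ht0 | htpos
  · exact ⟨(0, 0, 0), ⟨N, hN⟩, by simp [ht0], by simp, by simp⟩
  · have htop := (x_le_top hreg hp).2.2
    have hex : ∃ i, ((stepXYZ (Staircase n lo hi))^[i] (hi (n - 1))).2.2 < p.2.2 :=
      ⟨N, by rw [hN]; exact htpos⟩
    have hi0pos : Nat.find hex ≠ 0 := by
      intro h
      have hs := Nat.find_spec hex
      rw [h] at hs
      simp only [Function.iterate_zero, id_eq] at hs
      omega
    have hprev : ¬ ((stepXYZ (Staircase n lo hi))^[Nat.find hex - 1] (hi (n - 1))).2.2 < p.2.2 :=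
      Nat.find_min hex (by omega)
    have hsucc : stepXYZ (Staircase n lo hi)
        ((stepXYZ (Staircase n lo hi))^[Nat.find hex - 1] (hi (n - 1))) =
        (stepXYZ (Staircase n lo hi))^[Nat.find hex] (hi (n - 1)) := by
      conv_rhs => rw [show Nat.find hex = (Nat.find hex - 1) + 1 by omega]
      rw [Function.iterate_succ_apply']
    have hz := stepXYZ_z (Staircase n lo hi)
      ((stepXYZ (Staircase n lo hi))^[Nat.find hex - 1] (hi (n - 1)))
    rw [hsucc] at hz
    have hspec := Nat.find_spec hex
    have hdrop := stepXYZ_drop (C := Staircase n lo hi)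
      (p := (stepXYZ (Staircase n lo hi))^[Nat.find hex - 1] (hi (n - 1)))
      (by rw [hsucc]; omega)
    obtain ⟨m, hm, hqm⟩ := chainXYZ_mem hreg (Nat.find hex - 1)
    have hst := (stuck_xyz hreg m hm _ hqm hdrop.1 hdrop.2).2 p hp (by omega)
    exact ⟨_, ⟨Nat.find hex - 1, rfl⟩, by omega, hst.1, hst.2⟩

end ChainLemmas


section ChainLemmas2

variable {n : ℕ} {lo hi : ℕ → ℕ × ℕ × ℕ}

/-! ### Chain lemmas for the `(y,z,x)` order -/

lemma stepYZX_mem (hreg : RegularSeq n lo hi) {p : ℕ × ℕ × ℕ}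
    (hp : p ∈ Staircase n lo hi) : stepYZX (Staircase n lo hi) p ∈ Staircase n lo hi := by
  unfold stepYZX
  split_ifs with h1 h2
  · exact h1.2
  · exact h2.2
  · by_cases h0 : p = (0, 0, 0)
    · subst h0; simpa using hp
    · obtain ⟨m, hm, hpm⟩ := hp
      exact ((stuck_yzx hreg m hm p hpm h1 h2).1 h0).2

lemma chainYZX_mem (hreg : RegularSeq n lo hi) (i : ℕ) :
    (stepYZX (Staircase n lo hi))^[i] (hi (n - 1)) ∈ Staircase n lo hi := by
  induction i with
  | zero => simpa using top_mem hreg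
  | succ i ih => rw [Function.iterate_succ_apply']; exact stepYZX_mem hreg ih

lemma stepYZX_zero (C : Set (ℕ × ℕ × ℕ)) : stepYZX C (0, 0, 0) = (0, 0, 0) := by
  unfold stepYZX
  simp

lemma stepYZX_sum (hreg : RegularSeq n lo hi) {p : ℕ × ℕ × ℕ}
    (hp : p ∈ Staircase n lo hi) (h0 : p ≠ (0, 0, 0)) :
    (stepYZX (Staircase n lo hi) p).1 + (stepYZX (Staircase n lo hi) p).2.1 +
      (stepYZX (Staircase n lo hi) p).2.2 < p.1 + p.2.1 + p.2.2 := by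
  unfold stepYZX
  split_ifs with h1 h2
  · have := h1.1
    show p.1 + (p.2.1 - 1) + p.2.2 < p.1 + p.2.1 + p.2.2
    omega
  · have := h2.1
    show p.1 + p.2.1 + (p.2.2 - 1) < p.1 + p.2.1 + p.2.2
    omega
  · obtain ⟨m, hm, hpm⟩ := hp
    have := ((stuck_yzx hreg m hm p hpm h1 h2).1 h0).1
    show p.1 - 1 + p.2.1 + p.2.2 < p.1 + p.2.1 + p.2.2
    omega

lemma chainYZX_zero (hreg : RegularSeq n lo hi) :
    ∃ N, (stepYZX (Staircase n lo hi))^[N] (hi (n - 1)) = (0, 0, 0) := by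
  suffices h : ∀ k (p : ℕ × ℕ × ℕ), p ∈ Staircase n lo hi → p.1 + p.2.1 + p.2.2 ≤ k →
      (stepYZX (Staircase n lo hi))^[k] p = (0, 0, 0) by
    exact ⟨_, h _ _ (top_mem hreg) le_rfl⟩
  intro k
  induction k with
  | zero =>
    intro p hp hle
    obtain ⟨x, y, z⟩ := p
    simp only [Function.iterate_zero, id_eq]
    simp only [Prod.mk.injEq]
    simp at hle
    omega
  | succ k ih =>
    intro p hp hle
    by_cases h0 : p = (0, 0, 0)
    · subst h0
      rw [Function.iterate_succ_apply, stepYZX_zero]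
      exact ih _ hp (by simp)
    · rw [Function.iterate_succ_apply]
      exact ih _ (stepYZX_mem hreg hp)
        (by have := stepYZX_sum hreg hp h0; omega)

lemma stepYZX_x (C : Set (ℕ × ℕ × ℕ)) (p : ℕ × ℕ × ℕ) :
    (stepYZX C p).1 ≤ p.1 ∧ p.1 ≤ (stepYZX C p).1 + 1 := by
  unfold stepYZX
  split_ifs with h1 h2
  · exact ⟨le_rfl, Nat.le_succ _⟩
  · exact ⟨le_rfl, Nat.le_succ _⟩
  · exact ⟨Nat.sub_le _ _, by show p.1 ≤ p.1 - 1 + 1; omega⟩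

lemma stepYZX_drop {C : Set (ℕ × ℕ × ℕ)} {p : ℕ × ℕ × ℕ}
    (h : (stepYZX C p).1 ≠ p.1) :
    ¬(1 ≤ p.2.1 ∧ (p.1, p.2.1 - 1, p.2.2) ∈ C) ∧
    ¬(1 ≤ p.2.2 ∧ (p.1, p.2.1, p.2.2 - 1) ∈ C) := by
  unfold stepYZX at h
  split_ifs at h with h1 h2
  · simp at h
  · simp at h
  · exact ⟨h1, h2⟩

lemma chainYZX_reach (hreg : RegularSeq n lo hi) {p : ℕ × ℕ × ℕ}
    (hp : p ∈ Staircase n lo hi) :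
    ∃ b ∈ traceChain (stepYZX (Staircase n lo hi)) (hi (n - 1)),
      b.1 = p.1 ∧ b.2.1 ≤ p.2.1 ∧ b.2.2 ≤ p.2.2 := by
  classical
  obtain ⟨N, hN⟩ := chainYZX_zero hreg
  rcases Nat.eq_zero_or_pos p.1 with ht0 | htpos
  · exact ⟨(0, 0, 0), ⟨N, hN⟩, by simp [ht0], by simp, by simp⟩
  · have htop := (x_le_top hreg hp).1
    have hex : ∃ i, ((stepYZX (Staircase n lo hi))^[i] (hi (n - 1))).1 < p.1 :=
      ⟨N, by rw [hN]; exact htpos⟩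
    have hi0pos : Nat.find hex ≠ 0 := by
      intro h
      have hs := Nat.find_spec hex
      rw [h] at hs
      simp only [Function.iterate_zero, id_eq] at hs
      omega
    have hprev : ¬ ((stepYZX (Staircase n lo hi))^[Nat.find hex - 1] (hi (n - 1))).1 < p.1 :=
      Nat.find_min hex (by omega)
    have hsucc : stepYZX (Staircase n lo hi)
        ((stepYZX (Staircase n lo hi))^[Nat.find hex - 1] (hi (n - 1))) =
        (stepYZX (Staircase n lo hi))^[Nat.find hex] (hi (n - 1)) := by
      conv_rhs => rw [show Nat.find hex = (Nat.find hex - 1) + 1 by omega]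
      rw [Function.iterate_succ_apply']
    have hz := stepYZX_x (Staircase n lo hi)
      ((stepYZX (Staircase n lo hi))^[Nat.find hex - 1] (hi (n - 1)))
    rw [hsucc] at hz
    have hspec := Nat.find_spec hex
    have hdrop := stepYZX_drop (C := Staircase n lo hi)
      (p := (stepYZX (Staircase n lo hi))^[Nat.find hex - 1] (hi (n - 1)))
      (by rw [hsucc]; omega)
    obtain ⟨m, hm, hqm⟩ := chainYZX_mem hreg (Nat.find hex - 1)
    have hst := (stuck_yzx hreg m hm _ hqm hdrop.1 hdrop.2).2 p hp (by omega)
    exact ⟨_, ⟨Nat.find hex - 1, rfl⟩, by omega, hst.1, hst.2⟩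

/-! ### Chain lemmas for the `(z,x,y)` order -/

lemma stepZXY_mem (hreg : RegularSeq n lo hi) {p : ℕ × ℕ × ℕ}
    (hp : p ∈ Staircase n lo hi) : stepZXY (Staircase n lo hi) p ∈ Staircase n lo hi := by
  unfold stepZXY
  split_ifs with h1 h2
  · exact h1.2
  · exact h2.2
  · by_cases h0 : p = (0, 0, 0)
    · subst h0; simpa using hp
    · obtain ⟨m, hm, hpm⟩ := hp
      exact ((stuck_zxy hreg m hm p hpm h1 h2).1 h0).2

lemma chainZXY_mem (hreg : RegularSeq n lo hi) (i : ℕ) :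
    (stepZXY (Staircase n lo hi))^[i] (hi (n - 1)) ∈ Staircase n lo hi := by
  induction i with
  | zero => simpa using top_mem hreg
  | succ i ih => rw [Function.iterate_succ_apply']; exact stepZXY_mem hreg ih

lemma stepZXY_zero (C : Set (ℕ × ℕ × ℕ)) : stepZXY C (0, 0, 0) = (0, 0, 0) := by
  unfold stepZXY
  simp

lemma stepZXY_sum (hreg : RegularSeq n lo hi) {p : ℕ × ℕ × ℕ}
    (hp : p ∈ Staircase n lo hi) (h0 : p ≠ (0, 0, 0)) :
    (stepZXY (Staircase n lo hi) p).1 + (stepZXY (Staircase n lo hi) p).2.1 +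
      (stepZXY (Staircase n lo hi) p).2.2 < p.1 + p.2.1 + p.2.2 := by
  unfold stepZXY
  split_ifs with h1 h2
  · have := h1.1
    show p.1 + p.2.1 + (p.2.2 - 1) < p.1 + p.2.1 + p.2.2
    omega
  · have := h2.1
    show p.1 - 1 + p.2.1 + p.2.2 < p.1 + p.2.1 + p.2.2
    omega
  · obtain ⟨m, hm, hpm⟩ := hp
    have := ((stuck_zxy hreg m hm p hpm h1 h2).1 h0).1
    show p.1 + (p.2.1 - 1) + p.2.2 < p.1 + p.2.1 + p.2.2
    omega

lemma chainZXY_zero (hreg : RegularSeq n lo hi) :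
    ∃ N, (stepZXY (Staircase n lo hi))^[N] (hi (n - 1)) = (0, 0, 0) := by
  suffices h : ∀ k (p : ℕ × ℕ × ℕ), p ∈ Staircase n lo hi → p.1 + p.2.1 + p.2.2 ≤ k →
      (stepZXY (Staircase n lo hi))^[k] p = (0, 0, 0) by
    exact ⟨_, h _ _ (top_mem hreg) le_rfl⟩
  intro k
  induction k with
  | zero =>
    intro p hp hle
    obtain ⟨x, y, z⟩ := p
    simp only [Function.iterate_zero, id_eq]
    simp only [Prod.mk.injEq]
    simp at hle
    omega
  | succ k ih =>
    intro p hp hle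
    by_cases h0 : p = (0, 0, 0)
    · subst h0
      rw [Function.iterate_succ_apply, stepZXY_zero]
      exact ih _ hp (by simp)
    · rw [Function.iterate_succ_apply]
      exact ih _ (stepZXY_mem hreg hp)
        (by have := stepZXY_sum hreg hp h0; omega)

lemma stepZXY_y (C : Set (ℕ × ℕ × ℕ)) (p : ℕ × ℕ × ℕ) :
    (stepZXY C p).2.1 ≤ p.2.1 ∧ p.2.1 ≤ (stepZXY C p).2.1 + 1 := by
  unfold stepZXY
  split_ifs with h1 h2
  · exact ⟨le_rfl, Nat.le_succ _⟩
  · exact ⟨le_rfl, Nat.le_succ _⟩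
  · exact ⟨Nat.sub_le _ _, by show p.2.1 ≤ p.2.1 - 1 + 1; omega⟩

lemma stepZXY_drop {C : Set (ℕ × ℕ × ℕ)} {p : ℕ × ℕ × ℕ}
    (h : (stepZXY C p).2.1 ≠ p.2.1) :
    ¬(1 ≤ p.2.2 ∧ (p.1, p.2.1, p.2.2 - 1) ∈ C) ∧
    ¬(1 ≤ p.1 ∧ (p.1 - 1, p.2.1, p.2.2) ∈ C) := by
  unfold stepZXY at h
  split_ifs at h with h1 h2
  · simp at h
  · simp at h
  · exact ⟨h1, h2⟩

lemma chainZXY_reach (hreg : RegularSeq n lo hi) {p : ℕ × ℕ × ℕ}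
    (hp : p ∈ Staircase n lo hi) :
    ∃ c ∈ traceChain (stepZXY (Staircase n lo hi)) (hi (n - 1)),
      c.2.1 = p.2.1 ∧ c.2.2 ≤ p.2.2 ∧ c.1 ≤ p.1 := by
  classical
  obtain ⟨N, hN⟩ := chainZXY_zero hreg
  rcases Nat.eq_zero_or_pos p.2.1 with ht0 | htpos
  · exact ⟨(0, 0, 0), ⟨N, hN⟩, by simp [ht0], by simp, by simp⟩
  · have htop := (x_le_top hreg hp).2.1
    have hex : ∃ i, ((stepZXY (Staircase n lo hi))^[i] (hi (n - 1))).2.1 < p.2.1 :=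
      ⟨N, by rw [hN]; exact htpos⟩
    have hi0pos : Nat.find hex ≠ 0 := by
      intro h
      have hs := Nat.find_spec hex
      rw [h] at hs
      simp only [Function.iterate_zero, id_eq] at hs
      omega
    have hprev : ¬ ((stepZXY (Staircase n lo hi))^[Nat.find hex - 1] (hi (n - 1))).2.1 < p.2.1 :=
      Nat.find_min hex (by omega)
    have hsucc : stepZXY (Staircase n lo hi)
        ((stepZXY (Staircase n lo hi))^[Nat.find hex - 1] (hi (n - 1))) =
        (stepZXY (Staircase n lo hi))^[Nat.find hex] (hi (n - 1)) := by
      conv_rhs => rw [show Nat.find hex = (Nat.find hex - 1) + 1 by omega]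
      rw [Function.iterate_succ_apply']
    have hz := stepZXY_y (Staircase n lo hi)
      ((stepZXY (Staircase n lo hi))^[Nat.find hex - 1] (hi (n - 1)))
    rw [hsucc] at hz
    have hspec := Nat.find_spec hex
    have hdrop := stepZXY_drop (C := Staircase n lo hi)
      (p := (stepZXY (Staircase n lo hi))^[Nat.find hex - 1] (hi (n - 1)))
      (by rw [hsucc]; omega)
    obtain ⟨m, hm, hqm⟩ := chainZXY_mem hreg (Nat.find hex - 1)
    have hst := (stuck_zxy hreg m hm _ hqm hdrop.1 hdrop.2).2 p hp (by omega)
    exact ⟨_, ⟨Nat.find hex - 1, rfl⟩, by omega, hst.1, hst.2⟩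

/-! ### Closure of the staircase under componentwise max -/

lemma sup3_1 (a b : ℕ × ℕ × ℕ) : (sup3 a b).1 = max a.1 b.1 := rfl
lemma sup3_21 (a b : ℕ × ℕ × ℕ) : (sup3 a b).2.1 = max a.2.1 b.2.1 := rfl
lemma sup3_22 (a b : ℕ × ℕ × ℕ) : (sup3 a b).2.2 = max a.2.2 b.2.2 := rfl

lemma sup3_mem (hreg : RegularSeq n lo hi) {p q : ℕ × ℕ × ℕ}
    (hp : p ∈ Staircase n lo hi) (hq : q ∈ Staircase n lo hi) :
    sup3 p q ∈ Staircase n lo hi := by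
  obtain ⟨i, hi', hpi⟩ := hp
  obtain ⟨j, hj, hqj⟩ := hq
  rw [mem_cuboid'] at hpi hqj
  rcases le_total i j with h | h
  · refine ⟨j, hj, ?_⟩
    have hh := hi_mono hreg j hj i h
    rw [le3_iff] at hh
    rw [mem_cuboid', sup3_1, sup3_21, sup3_22]
    omega
  · refine ⟨i, hi', ?_⟩
    have hh := hi_mono hreg i hi' j h
    rw [le3_iff] at hh
    rw [mem_cuboid', sup3_1, sup3_21, sup3_22]
    omega

end ChainLemmas2

theorem staircase_eq_join_of_three_chains (n : ℕ) (lo hi : ℕ → ℕ × ℕ × ℕ)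
    (hreg : RegularSeq n lo hi) :
    Staircase n lo hi =
      {p : ℕ × ℕ × ℕ |
        ∃ a ∈ traceChain (stepXYZ (Staircase n lo hi)) (hi (n - 1)),
          ∃ b ∈ traceChain (stepYZX (Staircase n lo hi)) (hi (n - 1)),
            ∃ c ∈ traceChain (stepZXY (Staircase n lo hi)) (hi (n - 1)),
              p = sup3 (sup3 a b) c} := by
  ext p
  simp only [Set.mem_setOf_eq]
  constructor
  · intro hp
    obtain ⟨a, ha, ha1, ha2, ha3⟩ := chainXYZ_reach hreg hp
    obtain ⟨b, hb, hb1, hb2, hb3⟩ := chainYZX_reach hreg hp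
    obtain ⟨c, hc, hc1, hc2, hc3⟩ := chainZXY_reach hreg hp
    refine ⟨a, ha, b, hb, c, hc, ?_⟩
    rw [Prod.ext_iff, Prod.ext_iff]
    simp only [sup3_1, sup3_21, sup3_22]
    omega
  · rintro ⟨a, ha, b, hb, c, hc, rfl⟩
    obtain ⟨i, hia⟩ := ha
    obtain ⟨j, hjb⟩ := hb
    obtain ⟨k, hkc⟩ := hc
    have haS : a ∈ Staircase n lo hi := hia ▸ chainXYZ_mem hreg i
    have hbS : b ∈ Staircase n lo hi := hjb ▸ chainYZX_mem hreg j
    have hcS : c ∈ Staircase n lo hi := hkc ▸ chainZXY_mem hreg k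
    exact sup3_mem hreg (sup3_mem hreg haS hbS) hcS
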